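/- arXiv:2010.09521 — 6 statements merged into one kernel-verified Lean document; each statement's English description precedes it below -/
import Mathlib

section
/- Let g(x) = sinh²(x)·cosh(x) + x·sinh(x) − 2x²·cosh(x). Then g(x) > 0 for all x > 0. -/
open Real Set

lemma cosh_lb (x : ℝ) (hx : 0 ≤ x) : 1 + x^2/2 ≤ Real.cosh x := by
  have h : MonotoneOn (fun t : ℝ => Real.cosh t - (1 + t^2/2)) (Ici 0) := by
    apply monotoneOn_of_deriv_nonneg (convex_Ici 0)
    · exact (Real.continuous_cosh.sub (by continuity)).continuousOn
    · intro t ht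
      exact ((Real.differentiable_cosh t).sub (by fun_prop)).differentiableWithinAt
    · intro t ht
      rw [interior_Ici, mem_Ioi] at ht
      have : deriv (fun t : ℝ => Real.cosh t - (1 + t^2/2)) t = Real.sinh t - t := by
        have h1 : HasDerivAt (fun t : ℝ => Real.cosh t - (1 + t^2/2))
            (Real.sinh t - t) t := by
          have h2 := (Real.hasDerivAt_cosh t).sub
            (((hasDerivAt_pow 2 t).div_const 2).const_add 1)
          refine h2.congr_deriv ?_
          push_cast; ring
        exact h1.deriv
      rw [this, sub_nonneg]
      exact (Real.self_lt_sinh_iff.mpr ht).le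
  have := h (self_mem_Ici) hx hx
  simp at this
  linarith

lemma sinh_lb (x : ℝ) (hx : 0 ≤ x) : x + x^3/6 ≤ Real.sinh x := by
  have h : MonotoneOn (fun t : ℝ => Real.sinh t - (t + t^3/6)) (Ici 0) := by
    apply monotoneOn_of_deriv_nonneg (convex_Ici 0)
    · exact (Real.continuous_sinh.sub (by continuity)).continuousOn
    · intro t ht
      exact ((Real.differentiable_sinh t).sub (by fun_prop)).differentiableWithinAt
    · intro t ht
      rw [interior_Ici, mem_Ioi] at ht
      have : deriv (fun t : ℝ => Real.sinh t - (t + t^3/6)) t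
          = Real.cosh t - (1 + t^2/2) := by
        have h1 : HasDerivAt (fun t : ℝ => Real.sinh t - (t + t^3/6))
            (Real.cosh t - (1 + t^2/2)) t := by
          have h2 := (Real.hasDerivAt_sinh t).sub
            ((hasDerivAt_id t).add ((hasDerivAt_pow 3 t).div_const 6))
          refine h2.congr_deriv ?_
          push_cast; ring
        exact h1.deriv
      rw [this, sub_nonneg]
      exact cosh_lb t ht.le
  have := h (self_mem_Ici) hx hx
  simp at this
  linarith

theorem g_pos (g : ℝ → ℝ)
    (hg : ∀ x, g x = (Real.sinh x)^2 * Real.cosh x + x * Real.sinh x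
      - 2 * x^2 * Real.cosh x) :
    ∀ x > 0, g x > 0 := by
  intro x hx
  rw [hg]
  set s := Real.sinh x with hs
  set c := Real.cosh x with hc
  have hs_pos : 0 < s := Real.sinh_pos_iff.mpr hx
  have hc1 : 1 ≤ c := Real.one_le_cosh x
  have hcsq : c^2 = s^2 + 1 := Real.cosh_sq x
  have hslb : x + x^3/6 ≤ s := sinh_lb x hx.le
  have hcub : c ≤ 1 + s^2/2 := by nlinarith [sq_nonneg (s^2)]
  have key : s^2 * c + x * s - 2 * x^2 * c = c * (s^2 - 2*x^2) + x * s := by ring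
  rw [key]
  rcases le_or_gt (2*x^2) (s^2) with h | h
  · have : 0 ≤ c * (s^2 - 2*x^2) := mul_nonneg (by linarith) (by linarith)
    nlinarith [mul_pos hx hs_pos]
  · have hcb : c * (s^2 - 2*x^2) ≥ (1 + s^2/2) * (s^2 - 2*x^2) := by
      apply mul_le_mul_of_nonpos_right hcub (by linarith)
    nlinarith [sq_nonneg x, sq_nonneg (x^2), pow_pos hx 3, pow_pos hx 4, pow_pos hx 6,
      sq_nonneg (s - x), mul_pos hx hs_pos, sq_nonneg (x^3)]
end

section
/- Let g(x) = sinh²(x)·cosh(x) + x·sinh(x) − 2x²·cosh(x). Then the third derivative of g is strictly positive for all x > 0, and g(0) = g'(0) = g''(0) = 0. -/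
open Real

lemma cosh_le_one_add (x : ℝ) (hx : 0 ≤ x) : Real.cosh x ≤ 1 + x * Real.sinh x := by
  rw [Real.cosh_eq, Real.sinh_eq]
  have h1 : 1 - x ≤ Real.exp (-x) := by
    have := Real.add_one_le_exp (-x); linarith
  have h2 : (0:ℝ) < Real.exp x := Real.exp_pos x
  have h3 : Real.exp x * Real.exp (-x) = 1 := by
    rw [← Real.exp_add]; simp
  have hu1 : 1 ≤ Real.exp x := Real.one_le_exp hx
  have hkey : Real.exp x * (1 - x) ≤ 1 := by
    calc Real.exp x * (1 - x) ≤ Real.exp x * Real.exp (-x) :=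
          mul_le_mul_of_nonneg_left h1 h2.le
      _ = 1 := h3
  have hfac : (Real.exp x - 1) * ((1 + x) - Real.exp x * (1 - x)) ≥ 0 :=
    mul_nonneg (by linarith) (by linarith)
  nlinarith [Real.exp_pos (-x), mul_pos h2 h2]

lemma hd1 (x : ℝ) : HasDerivAt (fun x => (Real.sinh x)^2 * Real.cosh x + x * Real.sinh x
      - 2 * x^2 * Real.cosh x)
    (2 * Real.sinh x * Real.cosh x ^2 + Real.sinh x ^3 + Real.sinh x - 3*x*Real.cosh x - 2*x^2*Real.sinh x) x := by
  have hs := Real.hasDerivAt_sinh x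
  have hc := Real.hasDerivAt_cosh x
  have h := (((hs.pow 2).mul hc).add ((hasDerivAt_id x).mul hs)).sub
    ((((hasDerivAt_id x).pow 2).const_mul 2).mul hc)
  convert h using 1
  · rfl
  · rfl
  · funext y; simp
  simp
  ring

lemma hd2 (x : ℝ) : HasDerivAt (fun x => 2 * Real.sinh x * Real.cosh x ^2 + Real.sinh x ^3 + Real.sinh x - 3*x*Real.cosh x - 2*x^2*Real.sinh x)
    (2*Real.cosh x^3 + 7*Real.sinh x^2*Real.cosh x - 2*Real.cosh x - 7*x*Real.sinh x - 2*x^2*Real.cosh x) x := by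
  have hs := Real.hasDerivAt_sinh x
  have hc := Real.hasDerivAt_cosh x
  have h := (((((hs.const_mul 2).mul (hc.pow 2)).add (hs.pow 3)).add hs).sub
    (((hasDerivAt_id x).const_mul 3).mul hc)).sub ((((hasDerivAt_id x).pow 2).const_mul 2).mul hs)
  convert h using 1
  · rfl
  · rfl
  · funext y; simp
  simp
  nlinarith [Real.cosh_sq x, Real.sinh_sq x]

lemma hd3 (x : ℝ) : HasDerivAt (fun x => 2*Real.cosh x^3 + 7*Real.sinh x^2*Real.cosh x - 2*Real.cosh x - 7*x*Real.sinh x - 2*x^2*Real.cosh x)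
    (20*Real.sinh x*Real.cosh x^2 + 7*Real.sinh x^3 - 9*Real.sinh x - 11*x*Real.cosh x - 2*x^2*Real.sinh x) x := by
  have hs := Real.hasDerivAt_sinh x
  have hc := Real.hasDerivAt_cosh x
  have h := (((((hc.pow 3).const_mul 2).add (((hs.pow 2).const_mul 7).mul hc)).sub (hc.const_mul 2)).sub
    (((hasDerivAt_id x).const_mul 7).mul hs)).sub ((((hasDerivAt_id x).pow 2).const_mul 2).mul hc)
  convert h using 1
  · rfl
  · rfl
  · funext y; simp
  simp
  nlinarith [Real.cosh_sq x, Real.sinh_sq x]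

theorem g_third_deriv_pos (g : ℝ → ℝ)
    (hg : ∀ x, g x = (Real.sinh x)^2 * Real.cosh x + x * Real.sinh x
      - 2 * x^2 * Real.cosh x) :
    (∀ x > 0, deriv (deriv (deriv g)) x > 0) ∧
      g 0 = 0 ∧ deriv g 0 = 0 ∧ deriv (deriv g) 0 = 0 := by
  have hgfun : g = fun x => (Real.sinh x)^2 * Real.cosh x + x * Real.sinh x
      - 2 * x^2 * Real.cosh x := funext hg
  have e1 : deriv g = fun x => 2 * Real.sinh x * Real.cosh x ^2 + Real.sinh x ^3 + Real.sinh x - 3*x*Real.cosh x - 2*x^2*Real.sinh x := by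
    funext x; rw [hgfun]; exact (hd1 x).deriv
  have e2 : deriv (deriv g) = fun x => 2*Real.cosh x^3 + 7*Real.sinh x^2*Real.cosh x - 2*Real.cosh x - 7*x*Real.sinh x - 2*x^2*Real.cosh x := by
    funext x; rw [e1]; exact (hd2 x).deriv
  have e3 : deriv (deriv (deriv g)) = fun x => 20*Real.sinh x*Real.cosh x^2 + 7*Real.sinh x^3 - 9*Real.sinh x - 11*x*Real.cosh x - 2*x^2*Real.sinh x := by
    funext x; rw [e2]; exact (hd3 x).deriv
  refine ⟨?_, ?_, ?_, ?_⟩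
  · intro x hx
    rw [e3]
    have hs : x < Real.sinh x := Real.self_lt_sinh_iff.mpr hx
    have hc : Real.cosh x ≤ 1 + x * Real.sinh x := cosh_le_one_add x hx.le
    have hsq : Real.cosh x ^ 2 = 1 + Real.sinh x ^2 := by
      nlinarith [Real.cosh_sq x, Real.sinh_sq x]
    have hspos : 0 < Real.sinh x := lt_trans hx hs
    have h4 : x * Real.cosh x ≤ x + x^2 * Real.sinh x := by nlinarith [hc, hx.le]
    have h5 : x^2 * Real.sinh x < Real.sinh x ^3 := by nlinarith [mul_pos hx hspos]
    have h6 : Real.sinh x * Real.cosh x ^2 = Real.sinh x + Real.sinh x ^3 := by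
      rw [hsq]; ring
    simp only []
    nlinarith [h4, h5, h6, hs, mul_pos (mul_pos hx hx) hspos]
  · simp [hg]
  · rw [e1]; simp
  · rw [e2]; simp [Real.cosh_zero]
end

section
/- Fix σ > 0, g > 0, h > 0 with σ/(g·h²) > 1/3. Then the function λ(k) = (σk + g/k)·tanh(kh), defined for k > 0, is strictly increasing on (0, ∞). -/
open Real

noncomputable def F3aux (y : ℝ) : ℝ := (6 - y^2) * Real.cosh y - 6*y*Real.sinh y - 6
noncomputable def F2aux (y : ℝ) : ℝ := (10 - y^2) * Real.sinh y - 4*y*Real.cosh y - 6*y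
noncomputable def F1aux (y : ℝ) : ℝ := -2*y*Real.sinh y + (12 - y^2) * Real.cosh y - 3*y^2 - 12
noncomputable def F0aux (y : ℝ) : ℝ := (12 - y^2) * Real.sinh y - y^3 - 12*y

lemma hasDerivAt_F3aux (y : ℝ) :
    HasDerivAt F3aux (-(y^2) * Real.sinh y - 8*y*Real.cosh y) y := by
  have h1 := ((((hasDerivAt_pow 2 y).const_sub 6).mul (Real.hasDerivAt_cosh y)).sub
      (((hasDerivAt_id y).const_mul 6).mul (Real.hasDerivAt_sinh y))).sub_const 6
  refine h1.congr_deriv ?_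
  simp only [id_eq]
  push_cast
  ring

lemma hasDerivAt_F2aux (y : ℝ) : HasDerivAt F2aux (F3aux y) y := by
  have h1 := ((((hasDerivAt_pow 2 y).const_sub 10).mul (Real.hasDerivAt_sinh y)).sub
      (((hasDerivAt_id y).const_mul 4).mul (Real.hasDerivAt_cosh y))).sub
      ((hasDerivAt_id y).const_mul 6)
  refine h1.congr_deriv ?_
  unfold F3aux
  simp only [id_eq]
  push_cast
  ring

lemma hasDerivAt_F1aux (y : ℝ) : HasDerivAt F1aux (F2aux y) y := by
  have h1 := (((((hasDerivAt_id y).const_mul (-2)).mul (Real.hasDerivAt_sinh y)).add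
      (((hasDerivAt_pow 2 y).const_sub 12).mul (Real.hasDerivAt_cosh y))).sub
      ((hasDerivAt_pow 2 y).const_mul 3)).sub_const 12
  refine h1.congr_deriv ?_
  unfold F2aux
  simp only [id_eq]
  push_cast
  ring

lemma hasDerivAt_F0aux (y : ℝ) : HasDerivAt F0aux (F1aux y) y := by
  have h1 := ((((hasDerivAt_pow 2 y).const_sub 12).mul (Real.hasDerivAt_sinh y)).sub
      (hasDerivAt_pow 3 y)).sub ((hasDerivAt_id y).const_mul 12)
  refine h1.congr_deriv ?_
  unfold F1aux
  push_cast
  ring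

lemma F3aux_nonpos {y : ℝ} (hy : 0 ≤ y) : F3aux y ≤ 0 := by
  have hanti : AntitoneOn F3aux (Set.Ici (0 : ℝ)) := by
    apply antitoneOn_of_deriv_nonpos (convex_Ici 0)
    · have hdiff : Differentiable ℝ F3aux := fun x => (hasDerivAt_F3aux x).differentiableAt
      exact hdiff.continuous.continuousOn
    · intro x hx
      exact (hasDerivAt_F3aux x).differentiableAt.differentiableWithinAt
    · intro x hx
      rw [interior_Ici] at hx
      rw [(hasDerivAt_F3aux x).deriv]
      have h1 : 0 ≤ Real.sinh x := le_of_lt (lt_trans hx (Real.self_lt_sinh_iff.mpr hx))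
      have h2 : 0 < Real.cosh x := Real.cosh_pos x
      have p1 : 0 ≤ x^2 * Real.sinh x := mul_nonneg (sq_nonneg x) h1
      have p2 : 0 < x * Real.cosh x := mul_pos hx h2
      linarith
  have := hanti (Set.self_mem_Ici) hy hy
  simpa [F3aux] using this

lemma F2aux_nonpos {y : ℝ} (hy : 0 ≤ y) : F2aux y ≤ 0 := by
  have hanti : AntitoneOn F2aux (Set.Ici (0 : ℝ)) := by
    apply antitoneOn_of_deriv_nonpos (convex_Ici 0)
    · have hdiff : Differentiable ℝ F2aux := fun x => (hasDerivAt_F2aux x).differentiableAt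
      exact hdiff.continuous.continuousOn
    · intro x hx
      exact (hasDerivAt_F2aux x).differentiableAt.differentiableWithinAt
    · intro x hx
      rw [interior_Ici] at hx
      rw [(hasDerivAt_F2aux x).deriv]
      exact F3aux_nonpos (le_of_lt hx)
  have := hanti (Set.self_mem_Ici) hy hy
  simpa [F2aux] using this

lemma F1aux_nonpos {y : ℝ} (hy : 0 ≤ y) : F1aux y ≤ 0 := by
  have hanti : AntitoneOn F1aux (Set.Ici (0 : ℝ)) := by
    apply antitoneOn_of_deriv_nonpos (convex_Ici 0)
    · have hdiff : Differentiable ℝ F1aux := fun x => (hasDerivAt_F1aux x).differentiableAt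
      exact hdiff.continuous.continuousOn
    · intro x hx
      exact (hasDerivAt_F1aux x).differentiableAt.differentiableWithinAt
    · intro x hx
      rw [interior_Ici] at hx
      rw [(hasDerivAt_F1aux x).deriv]
      exact F2aux_nonpos (le_of_lt hx)
  have := hanti (Set.self_mem_Ici) hy hy
  simpa [F1aux] using this

lemma F0aux_nonpos {y : ℝ} (hy : 0 ≤ y) : F0aux y ≤ 0 := by
  have hanti : AntitoneOn F0aux (Set.Ici (0 : ℝ)) := by
    apply antitoneOn_of_deriv_nonpos (convex_Ici 0)
    · have hdiff : Differentiable ℝ F0aux := fun x => (hasDerivAt_F0aux x).differentiableAt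
      exact hdiff.continuous.continuousOn
    · intro x hx
      exact (hasDerivAt_F0aux x).differentiableAt.differentiableWithinAt
    · intro x hx
      rw [interior_Ici] at hx
      rw [(hasDerivAt_F0aux x).deriv]
      exact F1aux_nonpos (le_of_lt hx)
  have := hanti (Set.self_mem_Ici) hy hy
  simpa [F0aux] using this

/-- Key inequality: `3 (sinh x cosh x − x) ≤ x² (sinh x cosh x + x)` for `x ≥ 0`. -/
lemma key_ineq {x : ℝ} (hx : 0 ≤ x) :
    3 * (Real.sinh x * Real.cosh x - x) ≤ x^2 * (Real.sinh x * Real.cosh x + x) := by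
  have h0 := F0aux_nonpos (y := 2*x) (by linarith)
  unfold F0aux at h0
  rw [Real.sinh_two_mul] at h0
  nlinarith [h0]

lemma deriv_pos_aux (σ g h k : ℝ) (hσ : σ > 0) (hg : g > 0) (hh : h > 0)
    (hk0 : 0 < k) (hgh : g * h^2 < 3 * σ) :
    0 < (σ * 1 + (0 * k - g * 1) / k^2) * (Real.sinh (k*h) / Real.cosh (k*h)) +
      (σ * k + g / k) * ((Real.cosh (k*h) * Real.cosh (k*h) -
        Real.sinh (k*h) * Real.sinh (k*h)) / (Real.cosh (k*h))^2 * (1*h)) := by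
  set x := k * h with hxdef
  set s := Real.sinh x with hsdef
  set c := Real.cosh x with hcdef
  have hx : 0 < x := mul_pos hk0 hh
  have hc : 0 < c := Real.cosh_pos x
  have hcs : c^2 - s^2 = 1 := Real.cosh_sq_sub_sinh_sq x
  have hsx : x < s := Real.self_lt_sinh_iff.mpr hx
  have hsc : x < s * c := lt_of_lt_of_le hsx
    (le_mul_of_one_le_right (by linarith) (Real.one_le_cosh x))
  have hkey := key_ineq (le_of_lt hx)
  rw [← hsdef, ← hcdef] at hkey
  have hpos : 0 < (σ * k^2 - g) * (s * c) + (σ * k^2 + g) * x := by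
    have h1 : g * h^2 * (s * c - x) < 3 * σ * (s * c - x) :=
      mul_lt_mul_of_pos_right hgh (by linarith)
    have h2 : σ * (3 * (s * c - x)) ≤ σ * (x^2 * (s * c + x)) :=
      mul_le_mul_of_nonneg_left hkey (le_of_lt hσ)
    have h3 : g * h^2 * (s * c - x) < σ * x^2 * (s * c + x) := by linarith
    have hx2 : x^2 = k^2 * h^2 := by rw [hxdef]; ring
    have h4 : g * h^2 * (s * c - x) < σ * (k^2 * h^2) * (s * c + x) := by
      rw [← hx2]; linarith
    have hh2 : (0:ℝ) < h^2 := by positivity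
    have h5 : 0 < h^2 * (σ * k^2 * (s * c + x) - g * (s * c - x)) := by linarith [h4]
    nlinarith [h5, hh2]
  have heq : (σ * 1 + (0 * k - g * 1) / k^2) * (s / c) +
      (σ * k + g / k) * ((c * c - s * s) / c^2 * (1*h)) =
      ((σ * k^2 - g) * (s * c) + (σ * k^2 + g) * (k * h)) / (k^2 * c^2) := by
    rw [show c * c - s * s = 1 by nlinarith [hcs]]
    field_simp
    ring
  rw [heq, ← hxdef]
  exact div_pos hpos (by positivity)

theorem lambda_strict_mono (σ g h : ℝ) (hσ : σ > 0) (hg : g > 0) (hh : h > 0)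
    (hcond : σ / (g * h^2) > 1/3) :
    StrictMonoOn (fun k : ℝ => (σ * k + g / k) * Real.tanh (k * h))
      (Set.Ioi (0 : ℝ)) := by
  have hgh : g * h^2 < 3 * σ := by
    have h1 : (0:ℝ) < g * h^2 := by positivity
    rw [gt_iff_lt, div_lt_div_iff₀ (by norm_num) h1] at hcond
    linarith
  apply strictMonoOn_of_deriv_pos (convex_Ioi 0)
  · apply ContinuousOn.mul
    · exact (continuousOn_const.mul continuousOn_id).add
        (continuousOn_const.div continuousOn_id (fun x hx => ne_of_gt hx))
    · have htanh : Continuous Real.tanh := by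
        have hte : Real.tanh = fun x => Real.sinh x / Real.cosh x :=
          funext Real.tanh_eq_sinh_div_cosh
        rw [hte]
        exact Real.continuous_sinh.div Real.continuous_cosh (fun x => (Real.cosh_pos x).ne')
      exact (htanh.comp (continuous_id.mul continuous_const)).continuousOn
  · intro k hk
    rw [interior_Ioi] at hk
    have hk0 : (0:ℝ) < k := hk
    have hc : 0 < Real.cosh (k*h) := Real.cosh_pos _
    have hA : HasDerivAt (fun k : ℝ => σ * k + g / k)
        (σ * 1 + (0 * k - g * 1) / k^2) k :=
      ((hasDerivAt_id k).const_mul σ).add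
        ((hasDerivAt_const k g).div (hasDerivAt_id k) (ne_of_gt hk0))
    have hB : HasDerivAt (fun k : ℝ => Real.tanh (k * h))
        ((Real.cosh (k*h) * Real.cosh (k*h) - Real.sinh (k*h) * Real.sinh (k*h)) /
          (Real.cosh (k*h))^2 * (1 * h)) k := by
      have hm : HasDerivAt (fun k : ℝ => k * h) (1 * h) k := (hasDerivAt_id k).mul_const h
      have hsc : HasDerivAt (fun y : ℝ => Real.sinh y / Real.cosh y)
          ((Real.cosh (k*h) * Real.cosh (k*h) - Real.sinh (k*h) * Real.sinh (k*h)) /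
            (Real.cosh (k*h))^2) (k*h) :=
        (Real.hasDerivAt_sinh (k*h)).div (Real.hasDerivAt_cosh (k*h)) (ne_of_gt hc)
      have := hsc.comp k hm
      exact this.congr_of_eventuallyEq
        (Filter.Eventually.of_forall
          (fun y => by simp [Function.comp, Real.tanh_eq_sinh_div_cosh]))
    have hD : HasDerivAt (fun k : ℝ => (σ * k + g / k) * Real.tanh (k * h))
        ((σ * 1 + (0 * k - g * 1) / k^2) * Real.tanh (k*h) +
          (σ * k + g / k) * ((Real.cosh (k*h) * Real.cosh (k*h) -
            Real.sinh (k*h) * Real.sinh (k*h)) / (Real.cosh (k*h))^2 * (1 * h))) k :=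
      hA.mul hB
    rw [hD.deriv, Real.tanh_eq_sinh_div_cosh]
    exact deriv_pos_aux σ g h k hσ hg hh hk0 hgh
end

section
/- Fix σ > 0, g > 0, h > 0. At any critical point k₀ > 0 of λ(k) = (σk² + g)/(k·coth(kh)), one has λ''(k₀) > 0; in particular λ has no local maximum at any k₀ > 0. -/
open Real

lemma derivChain (f f' : ℝ → ℝ) (hd : ∀ u, HasDerivAt f (f' u) u)
    (hpos : ∀ u, 0 < u → 0 < f' u) {u : ℝ} (hu : 0 < u) : f 0 < f u := by
  have hmono : StrictMonoOn f (Set.Ici 0) := by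
    apply strictMonoOn_of_deriv_pos (convex_Ici 0)
    · exact fun x _ => (hd x).continuousAt.continuousWithinAt
    · intro x hx
      rw [interior_Ici] at hx
      rw [(hd x).deriv]
      exact hpos x hx
  exact hmono Set.self_mem_Ici (Set.mem_Ici.2 hu.le) hu

lemma hd_congr {f : ℝ → ℝ} {a b x : ℝ} (h : HasDerivAt f a x) (hab : a = b) :
    HasDerivAt f b x := hab ▸ h

lemma cosh_quad {u : ℝ} (hu : 0 < u) : 1 + u^2/2 < Real.cosh u := by
  have h2 : Real.cosh 0 - 1 - 0^2/2 < Real.cosh u - 1 - u^2/2 := by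
    apply derivChain (fun u => Real.cosh u - 1 - u^2/2) (fun u => Real.sinh u - u) _ _ hu
    · intro v
      exact hd_congr (((Real.hasDerivAt_cosh v).sub_const 1).sub ((hasDerivAt_pow 2 v).div_const 2)) (by push_cast; ring)
    · intro v hv
      show 0 < Real.sinh v - v
      have := Real.self_lt_sinh_iff.2 hv; linarith
  simp [Real.cosh_zero] at h2
  linarith

lemma f4pos {u : ℝ} (hu : 0 < u) :
    0 < 8*Real.cosh u^2 + 8*Real.sinh u^2 - 8*Real.cosh u - 7*u*Real.sinh u - u^2*Real.cosh u := by
  have hc1 : 1 ≤ Real.cosh u := Real.one_le_cosh u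
  have hs : u < Real.sinh u := Real.self_lt_sinh_iff.2 hu
  have hq : 1 + u^2/2 < Real.cosh u := cosh_quad hu
  have hid : Real.cosh u ^2 - Real.sinh u ^2 = 1 := Real.cosh_sq_sub_sinh_sq u
  have hsp : 0 < Real.sinh u := hu.trans hs
  have h1 : 0 ≤ (Real.sinh u - u) * Real.sinh u := mul_nonneg (sub_nonneg.2 hs.le) hsp.le
  have h2 : 0 ≤ (2*Real.cosh u - 2 - u^2) * Real.cosh u :=
    mul_nonneg (by nlinarith) (Real.cosh_pos u).le
  have h3 : 0 ≤ Real.cosh u * (Real.cosh u - 1) :=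
    mul_nonneg (Real.cosh_pos u).le (sub_nonneg.2 hc1)
  nlinarith [mul_pos hsp hsp]

lemma f3pos {u : ℝ} (hu : 0 < u) :
    0 < 8*(Real.sinh u*Real.cosh u) - 3*Real.sinh u - 5*(u*Real.cosh u) - u^2*Real.sinh u := by
  have h := derivChain (fun v => 8*(Real.sinh v*Real.cosh v) - 3*Real.sinh v - 5*(v*Real.cosh v) - v^2*Real.sinh v)
    (fun v => 8*Real.cosh v^2 + 8*Real.sinh v^2 - 8*Real.cosh v - 7*v*Real.sinh v - v^2*Real.cosh v)
    (fun v => by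
      have hs := Real.hasDerivAt_sinh v
      have hc := Real.hasDerivAt_cosh v
      have := ((((hs.mul hc).const_mul 8).sub (hs.const_mul 3)).sub
        (((hasDerivAt_id v).mul hc).const_mul 5)).sub ((hasDerivAt_pow 2 v).mul hs)
      refine hd_congr this ?_
      simp only [id_eq]
      push_cast
      ring)
    (fun v hv => f4pos hv) hu
  simp at h
  linarith

lemma f2pos {u : ℝ} (hu : 0 < u) :
    0 < 2*Real.cosh u^2 + 2*Real.sinh u^2 - 3*(u*Real.sinh u) - u^2*Real.cosh u - 2 := by
  have h := derivChain (fun v => 2*Real.cosh v^2 + 2*Real.sinh v^2 - 3*(v*Real.sinh v) - v^2*Real.cosh v - 2)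
    (fun v => 8*(Real.sinh v*Real.cosh v) - 3*Real.sinh v - 5*(v*Real.cosh v) - v^2*Real.sinh v)
    (fun v => by
      have hs := Real.hasDerivAt_sinh v
      have hc := Real.hasDerivAt_cosh v
      have := (((((hc.pow 2).const_mul 2).add ((hs.pow 2).const_mul 2)).sub
        (((hasDerivAt_id v).mul hs).const_mul 3)).sub ((hasDerivAt_pow 2 v).mul hc)).sub_const 2
      refine hd_congr this ?_
      simp only [id_eq]
      push_cast
      ring)
    (fun v hv => f3pos hv) hu
  simp at h
  linarith

lemma f1pos {u : ℝ} (hu : 0 < u) :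
    0 < 2*(Real.sinh u*Real.cosh u) + Real.sinh u - u*Real.cosh u - u^2*Real.sinh u - 2*u := by
  have h := derivChain (fun v => 2*(Real.sinh v*Real.cosh v) + Real.sinh v - v*Real.cosh v - v^2*Real.sinh v - 2*v)
    (fun v => 2*Real.cosh v^2 + 2*Real.sinh v^2 - 3*(v*Real.sinh v) - v^2*Real.cosh v - 2)
    (fun v => by
      have hs := Real.hasDerivAt_sinh v
      have hc := Real.hasDerivAt_cosh v
      have := (((((hs.mul hc).const_mul 2).add hs).sub ((hasDerivAt_id v).mul hc)).sub
        ((hasDerivAt_pow 2 v).mul hs)).sub ((hasDerivAt_id v).const_mul 2)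
      refine hd_congr this ?_
      simp only [id_eq]
      push_cast
      ring)
    (fun v hv => f2pos hv) hu
  simp at h
  linarith

lemma keyIneq {u : ℝ} (hu : 0 < u) :
    0 < Real.sinh u^2 + u*Real.sinh u - u^2*Real.cosh u - u^2 := by
  have h := derivChain (fun v => Real.sinh v^2 + v*Real.sinh v - v^2*Real.cosh v - v^2)
    (fun v => 2*(Real.sinh v*Real.cosh v) + Real.sinh v - v*Real.cosh v - v^2*Real.sinh v - 2*v)
    (fun v => by
      have hs := Real.hasDerivAt_sinh v
      have hc := Real.hasDerivAt_cosh v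
      have := (((hs.pow 2).add ((hasDerivAt_id v).mul hs)).sub
        ((hasDerivAt_pow 2 v).mul hc)).sub (hasDerivAt_pow 2 v)
      refine hd_congr this ?_
      simp only [id_eq]
      push_cast
      ring)
    (fun v hv => f1pos hv) hu
  simp at h
  linarith

lemma tanh_hasDerivAt (x : ℝ) : HasDerivAt Real.tanh (1 - Real.tanh x ^ 2) x := by
  have hc : Real.cosh x ≠ 0 := (Real.cosh_pos x).ne'
  have h3 := (Real.hasDerivAt_sinh x).div (Real.hasDerivAt_cosh x) hc
  have hval : (1 - Real.tanh x ^ 2) =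
      (Real.cosh x * Real.cosh x - Real.sinh x * Real.sinh x) / (Real.cosh x)^2 := by
    rw [Real.tanh_eq_sinh_div_cosh]
    field_simp
  have he : Real.tanh = fun y => Real.sinh y / Real.cosh y :=
    funext fun y => Real.tanh_eq_sinh_div_cosh y
  rw [hval, he]
  exact h3

lemma keyIneq2 {x : ℝ} (hx : 0 < x) :
    0 < Real.sinh x^2 * Real.cosh x^2 + x*(Real.sinh x*Real.cosh x) - 2*x^2*Real.cosh x^2 := by
  have h := keyIneq (u := 2*x) (by linarith)
  rw [Real.sinh_two_mul, Real.cosh_two_mul] at h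
  have hid := Real.cosh_sq_sub_sinh_sq x
  nlinarith [h, hid]

set_option maxHeartbeats 1000000 in
theorem critical_point_second_deriv_pos (σ g h : ℝ)
    (hσ : σ > 0) (hg : g > 0) (hh : h > 0) (lam : ℝ → ℝ)
    (hlam : ∀ k, lam k = (σ * k^2 + g) * Real.tanh (k * h) / k)
    (k₀ : ℝ) (hk₀ : k₀ > 0) (hcrit : deriv lam k₀ = 0) :
    deriv (deriv lam) k₀ > 0 ∧ ¬ IsLocalMax lam k₀ := by
  have hk0 : k₀ ≠ 0 := ne_of_gt hk₀
  set T : ℝ → ℝ := fun k => Real.tanh (k * h) with hTdef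
  set F1 : ℝ → ℝ := fun k =>
    (σ - g / k^2) * T k + (σ * k + g / k) * (h * (1 - T k ^ 2)) with hF1def
  set F2 : ℝ → ℝ := fun k =>
    (2*g/k^3) * T k + 2*((σ - g/k^2) * (h*(1 - T k^2)))
      + (σ * k + g / k) * (-(2*h^2) * (T k * (1 - T k^2))) with hF2def
  -- derivative of T
  have hTd : ∀ k : ℝ, HasDerivAt T ((1 - T k ^ 2) * h) k := by
    intro k
    have := (tanh_hasDerivAt (k*h)).comp k ((hasDerivAt_id k).mul_const h)
    simpa [Function.comp_def, hTdef] using this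
  -- derivative of lamE
  have hAd : ∀ k : ℝ, k ≠ 0 → HasDerivAt (fun k : ℝ => σ * k + g / k) (σ - g/k^2) k := by
    intro k hk
    have h1 : HasDerivAt (fun k : ℝ => σ * k) σ k := by
      simpa using (hasDerivAt_id k).const_mul σ
    have h2 : HasDerivAt (fun k : ℝ => g / k) (-(g/k^2)) k := by
      have := (hasDerivAt_inv hk).const_mul g
      simpa [div_eq_mul_inv, sq] using this
    have := h1.add h2
    refine hd_congr this (by ring)
  have hlamEd : ∀ k : ℝ, k ≠ 0 → HasDerivAt (fun k => (σ * k + g / k) * T k) (F1 k) k := by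
    intro k hk
    refine hd_congr ((hAd k hk).mul (hTd k)) ?_
    rw [hF1def]; ring
  -- derivative of F1
  have hF1d : ∀ k : ℝ, k ≠ 0 → HasDerivAt F1 (F2 k) k := by
    intro k hk
    have p1 : HasDerivAt (fun k : ℝ => σ - g / k^2) (2*g/k^3) k := by
      have hp : HasDerivAt (fun k : ℝ => k^2) (2*k) k := by
        simpa using hasDerivAt_pow 2 k
      have := ((hp.inv (pow_ne_zero 2 hk)).const_mul g).const_sub σ
      refine hd_congr this ?_
      field_simp
    have p2 : HasDerivAt (fun k : ℝ => h * (1 - T k ^ 2))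
        (h * (-(2 * T k * ((1 - T k ^ 2) * h)))) k := by
      have := (((hTd k).pow 2).const_sub 1).const_mul h
      refine hd_congr this ?_
      push_cast; ring
    have := (p1.mul (hTd k)).add ((hAd k hk).mul p2)
    refine hd_congr this ?_
    rw [hF2def]; ring
  -- lam agrees with the smooth formula near k₀
  have hne : ∀ᶠ k in nhds k₀, k ≠ 0 := eventually_ne_nhds hk0
  have hev : lam =ᶠ[nhds k₀] (fun k => (σ * k + g / k) * T k) := by
    filter_upwards [hne] with k hk
    rw [hlam k]
    field_simp [hTdef]
    try ring
    try tauto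
  have hd1 : deriv lam =ᶠ[nhds k₀] F1 := by
    refine (hev.deriv).trans ?_
    filter_upwards [hne] with k hk
    exact (hlamEd k hk).deriv
  have hF1k : F1 k₀ = 0 := by
    rw [← hd1.self_of_nhds]; exact hcrit
  have hdd : deriv (deriv lam) k₀ = F2 k₀ := by
    rw [hd1.deriv_eq]
    exact (hF1d k₀ hk0).deriv
  -- core algebra: F2 k₀ > 0
  have hx : 0 < k₀ * h := mul_pos hk₀ hh
  set S := Real.sinh (k₀*h) with hSdef
  set c := Real.cosh (k₀*h) with hcdef
  have hc : 0 < c := Real.cosh_pos _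
  have hS : 0 < S := by rw [hSdef]; exact (Real.sinh_pos_iff).2 hx
  have hid : c^2 - S^2 = 1 := Real.cosh_sq_sub_sinh_sq _
  have htanh : T k₀ = S / c := by rw [hTdef]; exact Real.tanh_eq_sinh_div_cosh _
  have hE : (g - σ*k₀^2)*(S*c) = (k₀*h)*(σ*k₀^2+g) := by
    have h1 := hF1k
    rw [hF1def] at h1
    simp only at h1
    rw [htanh] at h1
    field_simp at h1
    refine mul_right_cancel₀ (b := k₀*c) (by positivity) ?_
    linear_combination (-k₀*c)*h1 + (k₀^2*c*h*(σ*k₀^2+g))*hid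
  have hgB : 0 < g - σ*k₀^2 := by
    rcases lt_or_ge 0 (g - σ*k₀^2) with h1 | h1
    · exact h1
    · exfalso
      have h2 : 0 < (k₀*h)*(σ*k₀^2+g) := by positivity
      nlinarith [mul_pos hS hc]
  have hK := keyIneq2 hx
  have hG : 0 < g*S*c^2 + (σ*k₀^3 - g*k₀)*h*c - k₀^2*(σ*k₀^2+g)*h^2*S := by
    have hGid : (g*S*c^2 + (σ*k₀^3 - g*k₀)*h*c - k₀^2*(σ*k₀^2+g)*h^2*S) * (S*c + k₀*h)
        = g * c * (S^2*c^2 + (k₀*h)*(S*c) - 2*(k₀*h)^2*c^2) := by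
      linear_combination ((k₀*h)^2*S - (k₀*h)*c) * hE + (2*g*(k₀*h)^2*c) * hid
    have hpos : 0 < (g*S*c^2 + (σ*k₀^3 - g*k₀)*h*c - k₀^2*(σ*k₀^2+g)*h^2*S) * (S*c + k₀*h) := by
      rw [hGid]
      have : 0 < S^2*c^2 + (k₀*h)*(S*c) - 2*(k₀*h)^2*c^2 := hK
      positivity
    nlinarith [mul_pos hS hc, hx, hpos]
  have hF2G : F2 k₀ * (k₀^3*c^3) = 2*(g*S*c^2 + (σ*k₀^3 - g*k₀)*h*c - k₀^2*(σ*k₀^2+g)*h^2*S) := by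
    rw [hF2def]
    simp only
    rw [htanh]
    field_simp
    linear_combination (c*k₀*(k₀^2*σ-g)*h - k₀^2*S*h^2*(k₀^2*σ+g)) * hid
  have hF2pos : 0 < F2 k₀ := by
    nlinarith [hF2G, hG, mul_pos (pow_pos hk₀ 3) (pow_pos hc 3)]
  have hlam' : ∀ k : ℝ, k ≠ 0 → lam k = (σ * k + g / k) * T k := by
    intro k hk
    rw [hlam k, hTdef]
    field_simp
    try ring
    try tauto
  refine ⟨by rw [hdd]; exact hF2pos, ?_⟩
  intro hmax
  -- F1 is positive just to the right of k₀
  have hslope : Filter.Tendsto (slope F1 k₀) (nhdsWithin k₀ {k₀}ᶜ) (nhds (F2 k₀)) :=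
    hasDerivAt_iff_tendsto_slope.1 (hF1d k₀ hk0)
  have hpos' : ∀ᶠ y in nhdsWithin k₀ {k₀}ᶜ, 0 < slope F1 k₀ y :=
    hslope.eventually (eventually_gt_nhds hF2pos)
  have hmono' : nhdsWithin k₀ (Set.Ioi k₀) ≤ nhdsWithin k₀ {k₀}ᶜ :=
    nhdsWithin_mono k₀ (fun y hy => ne_of_gt hy)
  have hF1pos : ∀ᶠ y in nhdsWithin k₀ (Set.Ioi k₀), 0 < F1 y := by
    filter_upwards [hpos'.filter_mono hmono', self_mem_nhdsWithin] with y hy hy'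
    have hyk : 0 < y - k₀ := sub_pos.2 hy'
    have h4 : 0 < (F1 y - F1 k₀) / (y - k₀) := by
      simpa [slope_def_field] using hy
    have h5 := mul_pos h4 hyk
    rw [div_mul_cancel₀ _ hyk.ne'] at h5
    rw [hF1k, sub_zero] at h5
    exact h5
  have hdpos : ∀ᶠ y in nhdsWithin k₀ (Set.Ioi k₀), 0 < deriv lam y := by
    filter_upwards [hF1pos, (hd1.filter_mono nhdsWithin_le_nhds)] with y h1 h2
    rw [h2]; exact h1
  obtain ⟨b, hb, hsub⟩ := mem_nhdsGT_iff_exists_Ioc_subset.1 hdpos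
  rw [Set.mem_Ioi] at hb
  have hcont : ContinuousOn lam (Set.Icc k₀ b) := by
    apply ContinuousOn.congr (f := fun k => (σ * k + g / k) * T k)
    · intro k hk
      have hkpos : (0:ℝ) < k := lt_of_lt_of_le hk₀ hk.1
      exact ((hlamEd k hkpos.ne').continuousAt.continuousWithinAt)
    · intro k hk
      exact hlam' k (lt_of_lt_of_le hk₀ hk.1).ne'
  have hmono2 : StrictMonoOn lam (Set.Icc k₀ b) := by
    apply strictMonoOn_of_deriv_pos (convex_Icc _ _) hcont
    intro y hy
    rw [interior_Icc] at hy
    exact hsub ⟨hy.1, hy.2.le⟩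
  have hev2 : ∀ᶠ y in nhdsWithin k₀ (Set.Ioi k₀), lam k₀ < lam y := by
    filter_upwards [Ioc_mem_nhdsGT_of_mem ⟨le_refl k₀, hb⟩] with y hy
    exact hmono2 ⟨le_refl k₀, hb.le⟩ ⟨hy.1.le, hy.2⟩ hy.1
  have hev3 : ∀ᶠ y in nhdsWithin k₀ (Set.Ioi k₀), lam y ≤ lam k₀ :=
    hmax.filter_mono nhdsWithin_le_nhds
  obtain ⟨y, h1, h2⟩ := (hev2.and hev3).exists
  linarith
end

section
/- Fix h > 0, k > 0, σ > 0, g > 0 with C := k²σ/g > 1/2. For every integer n ≥ 2, E(n) := C·(n·tanh(nkh) − tanh(kh)) + tanh(nkh)/n − tanh(kh) > 0. -/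
lemma tanh_pos_of_pos {x : ℝ} (hx : 0 < x) : 0 < Real.tanh x := by
  rw [Real.tanh_eq_sinh_div_cosh]
  exact div_pos (Real.sinh_pos_iff.mpr hx) (Real.cosh_pos x)

lemma tanh_le_tanh {x y : ℝ} (hxy : x ≤ y) : Real.tanh x ≤ Real.tanh y := by
  rw [Real.tanh_eq_sinh_div_cosh, Real.tanh_eq_sinh_div_cosh,
    div_le_div_iff₀ (Real.cosh_pos x) (Real.cosh_pos y)]
  have h : Real.sinh (x - y) ≤ 0 := by
    simpa using Real.sinh_le_sinh.mpr (sub_nonpos.mpr hxy)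
  rw [Real.sinh_sub] at h
  linarith

theorem E_pos (h k σ g C : ℝ) (hh : h > 0) (hk : k > 0) (hσ : σ > 0) (hg : g > 0)
    (hC : C = k^2 * σ / g) (hChalf : C > 1/2) :
    ∀ n : ℕ, 2 ≤ n →
      C * ((n : ℝ) * Real.tanh (n * k * h) - Real.tanh (k * h))
        + Real.tanh (n * k * h) / n - Real.tanh (k * h) > 0 := by
  intro n hn
  have hn2 : (2:ℝ) ≤ (n:ℝ) := by exact_mod_cast hn
  have hn0 : (0:ℝ) < (n:ℝ) := by linarith
  set t1 := Real.tanh (k * h) with ht1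
  set tn := Real.tanh ((n:ℝ) * k * h) with htn
  have h1 : 0 < t1 := tanh_pos_of_pos (by positivity)
  have h2 : t1 ≤ tn := tanh_le_tanh (by nlinarith [mul_pos hk hh])
  have key : (n:ℝ) * (C * ((n:ℝ) * tn - t1) + tn / n - t1)
      = C * ((n:ℝ)^2 * tn - (n:ℝ) * t1) + tn - (n:ℝ) * t1 := by
    field_simp
  have hpos : 0 < (n:ℝ) * (C * ((n:ℝ) * tn - t1) + tn / n - t1) := by
    rw [key]
    have hA : 0 < (n:ℝ)^2 * tn - (n:ℝ) * t1 := by nlinarith [mul_pos hn0 h1]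
    have hB := mul_pos (by linarith : (0:ℝ) < C - 1/2) hA
    have hD : 0 ≤ ((n:ℝ)^2 + 2) * (tn - t1) := by nlinarith
    have hE : 0 ≤ t1 * ((n:ℝ)^2 - 3*(n:ℝ) + 2) :=
      mul_nonneg h1.le (by nlinarith)
    nlinarith [hB, hD, hE]
  by_contra hle
  push_neg at hle
  nlinarith [mul_nonneg hn0.le (neg_nonneg.mpr hle)]
end

section
/- Fix σ > 0, g > 0, h > 0. The function λ(k) = (σk² + g)·tanh(kh)/k extends continuously to k = 0 with λ(0) = gh, and the condition σ/(gh²) > 1/3 is equivalent to the second derivative of this extension being positive at 0. -/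
open Real Filter Set Nat Topology


noncomputable def sinhc (x : ℝ) : ℝ := ∑' n : ℕ, x ^ (2*n) / ((2*n+1)! : ℝ)
noncomputable def sinhc1 (x : ℝ) : ℝ :=
  ∑' n : ℕ, (((2*n : ℕ) : ℝ) * x ^ (2*n-1)) / ((2*n+1)! : ℝ)
noncomputable def sinhc2 (x : ℝ) : ℝ :=
  ∑' n : ℕ, (((2*n : ℕ) : ℝ) * (((2*n-1 : ℕ) : ℝ) * x ^ (2*n-1-1))) / ((2*n+1)! : ℝ)

lemma sinhc_zero : sinhc 0 = 1 := by
  rw [sinhc, tsum_eq_single 0]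
  · simp
  · intro n hn
    rw [zero_pow (by omega), zero_div]

lemma sinhc1_zero : sinhc1 0 = 0 := by
  rw [sinhc1]
  convert tsum_zero with n
  rcases n with _ | n
  · simp
  · rw [zero_pow (by omega)]
    ring

lemma sinhc2_zero : sinhc2 0 = 1/3 := by
  rw [sinhc2, tsum_eq_single 1]
  · norm_num [Nat.factorial]
  · intro n hn
    rcases n with _ | _ | n
    · simp
    · simp at hn
    · rw [zero_pow (by omega)]
      ring

lemma cast_fact_le {a b : ℕ} (hab : a ≤ b) : ((a ! : ℕ) : ℝ) ≤ ((b ! : ℕ) : ℝ) := by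
  exact_mod_cast Nat.factorial_le hab

lemma sinhc_hasDerivAt : ∀ x ∈ Ioo (-1:ℝ) 1, HasDerivAt sinhc (sinhc1 x) x := by
  intro x hx
  exact hasDerivAt_tsum_of_isPreconnected
    (u := fun n => (2*2^n/(n ! : ℕ) : ℝ))
    (g := fun n z => z ^ (2*n) / ((2*n+1)! : ℝ))
    (g' := fun n z => (((2*n : ℕ) : ℝ) * z ^ (2*n-1)) / ((2*n+1)! : ℝ))
    (by
      have := (Real.summable_pow_div_factorial 2).mul_left 2
      simpa [mul_div_assoc] using this)
    isOpen_Ioo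
    (convex_Ioo _ _).isPreconnected
    (fun n y _ => (hasDerivAt_pow (2*n) y).div_const _)
    (by
      intro n y hy
      have hy1 : |y| ≤ 1 := by
        rw [abs_le]; exact ⟨hy.1.le, hy.2.le⟩
      rw [norm_div, norm_mul]
      have h1 : ‖y ^ (2*n-1)‖ ≤ 1 := by
        rw [norm_pow]
        exact pow_le_one₀ (abs_nonneg _) hy1
      have h2 : ‖(((2*n : ℕ) : ℝ))‖ ≤ 2*2^n := by
        rw [Real.norm_natCast]
        have : (n : ℝ) ≤ 2^n := by exact_mod_cast (Nat.lt_two_pow_self).le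
        push_cast
        nlinarith
      have h3 : ((n ! : ℕ) : ℝ) ≤ ‖(((2*n+1)! : ℕ) : ℝ)‖ := by
        rw [Real.norm_natCast]
        exact cast_fact_le (by omega)
      have hfp : (0:ℝ) < ((n ! : ℕ) : ℝ) := by positivity
      calc ‖(((2*n : ℕ) : ℝ))‖ * ‖y ^ (2*n-1)‖ / ‖(((2*n+1)! : ℕ) : ℝ)‖
          ≤ (2*2^n) * 1 / ((n ! : ℕ) : ℝ) :=
            div_le_div₀ (by positivity) (by nlinarith [norm_nonneg (((2*n:ℕ):ℝ)), norm_nonneg (y ^ (2*n-1))]) hfp h3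
      _ = 2*2^n / ((n ! : ℕ) : ℝ) := by ring)
    (show (0:ℝ) ∈ Ioo (-1:ℝ) 1 by norm_num)
    (by
      apply summable_of_ne_finset_zero (s := {0})
      intro n hn
      simp only [Finset.mem_singleton] at hn
      have : (0:ℝ)^(2*n) = 0 := zero_pow (by omega)
      simp [this])
    hx

lemma sinhc1_hasDerivAt : ∀ x ∈ Ioo (-1:ℝ) 1, HasDerivAt sinhc1 (sinhc2 x) x := by
  intro x hx
  exact hasDerivAt_tsum_of_isPreconnected
    (u := fun n => (4*4^n/(n ! : ℕ) : ℝ))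
    (g := fun n z => (((2*n : ℕ) : ℝ) * z ^ (2*n-1)) / ((2*n+1)! : ℝ))
    (g' := fun n z => (((2*n : ℕ) : ℝ) * (((2*n-1 : ℕ) : ℝ) * z ^ (2*n-1-1))) / ((2*n+1)! : ℝ))
    (by
      have := (Real.summable_pow_div_factorial 4).mul_left 4
      simpa [mul_div_assoc] using this)
    isOpen_Ioo
    (convex_Ioo _ _).isPreconnected
    (fun n y _ => ((hasDerivAt_pow (2*n-1) y).const_mul _).div_const _)
    (by
      intro n y hy
      have hy1 : |y| ≤ 1 := by
        rw [abs_le]; exact ⟨hy.1.le, hy.2.le⟩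
      rw [norm_div, norm_mul, norm_mul]
      have h1 : ‖y ^ (2*n-1-1)‖ ≤ 1 := by
        rw [norm_pow]
        exact pow_le_one₀ (abs_nonneg _) hy1
      have hn2 : (n : ℝ) ≤ 2^n := by exact_mod_cast (Nat.lt_two_pow_self).le
      have h2 : ‖(((2*n : ℕ) : ℝ))‖ ≤ 2*2^n := by
        rw [Real.norm_natCast]; push_cast; nlinarith
      have h2' : ‖(((2*n-1 : ℕ) : ℝ))‖ ≤ 2*2^n := by
        rw [Real.norm_natCast]
        have : ((2*n-1 : ℕ) : ℝ) ≤ ((2*n : ℕ) : ℝ) := by exact_mod_cast Nat.sub_le _ _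
        refine this.trans ?_
        push_cast; nlinarith
      have h3 : ((n ! : ℕ) : ℝ) ≤ ‖(((2*n+1)! : ℕ) : ℝ)‖ := by
        rw [Real.norm_natCast]
        exact cast_fact_le (by omega)
      have hfp : (0:ℝ) < ((n ! : ℕ) : ℝ) := by positivity
      have hb : ‖(((2*n : ℕ) : ℝ))‖ * (‖(((2*n-1 : ℕ) : ℝ))‖ * ‖y ^ (2*n-1-1)‖) ≤ (2*2^n) * (2*2^n) := by
        calc ‖(((2*n : ℕ) : ℝ))‖ * (‖(((2*n-1 : ℕ) : ℝ))‖ * ‖y ^ (2*n-1-1)‖)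
            ≤ (2*2^n) * ((2*2^n) * 1) := by gcongr
        _ = (2*2^n) * (2*2^n) := by ring
      calc ‖(((2*n : ℕ) : ℝ))‖ * (‖(((2*n-1 : ℕ) : ℝ))‖ * ‖y ^ (2*n-1-1)‖) / ‖(((2*n+1)! : ℕ) : ℝ)‖
          ≤ (2*2^n) * (2*2^n) / ((n ! : ℕ) : ℝ) := div_le_div₀ (by positivity) hb hfp h3
      _ = 4*4^n / ((n ! : ℕ) : ℝ) := by
            rw [show (4:ℝ)^n = 2^n * 2^n by rw [← mul_pow]; norm_num]
            ring)
    (show (0:ℝ) ∈ Ioo (-1:ℝ) 1 by norm_num)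
    (by
      apply summable_of_ne_finset_zero (s := {0, 1})
      intro n hn
      simp only [Finset.mem_insert, Finset.mem_singleton] at hn
      push_neg at hn
      have : (0:ℝ)^(2*n-1) = 0 := zero_pow (by omega)
      simp [this])
    hx

lemma mul_sinhc {x : ℝ} (hx : |x| ≤ 1) : x * sinhc x = Real.sinh x := by
  have hs : Summable (fun n : ℕ => x ^ (2*n) / ((2*n+1)! : ℝ)) := by
    apply Summable.of_norm_bounded (Real.summable_pow_div_factorial 1)
    intro n
    rw [norm_div, norm_pow]
    have h1 : |x| ^ (2*n) ≤ 1 := pow_le_one₀ (abs_nonneg _) hx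
    have h3 : ((n ! : ℕ) : ℝ) ≤ ‖(((2*n+1)! : ℕ) : ℝ)‖ := by
      rw [Real.norm_natCast]; exact cast_fact_le (by omega)
    have hfp : (0:ℝ) < ((n ! : ℕ) : ℝ) := by positivity
    calc |x| ^ (2*n) / ‖(((2*n+1)! : ℕ) : ℝ)‖ ≤ 1 / ((n ! : ℕ) : ℝ) :=
          div_le_div₀ zero_le_one h1 hfp h3
    _ = 1^n / ((n ! : ℕ) : ℝ) := by rw [one_pow]
  have h1 : HasSum (fun n : ℕ => x ^ (2*n) / ((2*n+1)! : ℝ)) (sinhc x) := hs.hasSum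
  have h2 := h1.mul_left x
  have h3 : HasSum (fun n : ℕ => x ^ (2*n+1) / ((2*n+1)! : ℝ)) (x * sinhc x) := by
    have he : (fun n : ℕ => x ^ (2*n+1) / ((2*n+1)! : ℝ))
        = fun n : ℕ => x * (x ^ (2*n) / ((2*n+1)! : ℝ)) := by
      funext n; rw [pow_succ]; ring
    rw [he]; exact h2
  exact h3.unique (Real.hasSum_sinh x)

theorem lambda_extension (σ g h : ℝ) (hσ : σ > 0) (hg : g > 0) (hh : h > 0)
    (lam : ℝ → ℝ)
    (hlam0 : lam 0 = g * h)
    (hlam : ∀ k : ℝ, k ≠ 0 → lam k = (σ * k^2 + g) * Real.tanh (k * h) / k) :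
    Filter.Tendsto (fun k : ℝ => (σ * k^2 + g) * Real.tanh (k * h) / k)
      (nhdsWithin 0 (Set.Ioi 0)) (nhds (g * h)) ∧
    (σ / (g * h^2) > 1/3 ↔ deriv (deriv lam) 0 > 0) := by
  have h0h : (0:ℝ) < 1/h := by positivity
  have habs : ∀ k : ℝ, |k| < 1/h → |k * h| < 1 := by
    intro k hk
    rw [abs_mul, abs_of_pos hh]
    calc |k| * h < (1/h) * h := by gcongr
    _ = 1 := by field_simp
  have hmem : ∀ k : ℝ, |k| < 1/h → k * h ∈ Ioo (-1:ℝ) 1 := fun k hk => by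
    have := abs_lt.mp (habs k hk); exact ⟨this.1, this.2⟩
  set G : ℝ → ℝ := fun k => (σ*k^2+g)*h*sinhc (k*h)/Real.cosh (k*h) with hGdef
  set G1 : ℝ → ℝ := fun k =>
    ((2*σ*k*h * sinhc (k*h) + (σ*k^2+g)*h*(sinhc1 (k*h)*h)) * Real.cosh (k*h)
      - (σ*k^2+g)*h*sinhc (k*h) * (Real.sinh (k*h)*h)) / Real.cosh (k*h)^2 with hG1def
  have hFk : ∀ k : ℝ, |k| < 1/h → HasDerivAt (fun k => sinhc (k*h)) (sinhc1 (k*h) * h) k := by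
    intro k hk
    exact (sinhc_hasDerivAt (k*h) (hmem k hk)).comp k (hasDerivAt_mul_const h)
  have hF1k : ∀ k : ℝ, |k| < 1/h → HasDerivAt (fun k => sinhc1 (k*h)) (sinhc2 (k*h) * h) k := by
    intro k hk
    exact (sinhc1_hasDerivAt (k*h) (hmem k hk)).comp k (hasDerivAt_mul_const h)
  have hCk : ∀ k : ℝ, HasDerivAt (fun k => Real.cosh (k*h)) (Real.sinh (k*h) * h) k := by
    intro k
    exact (Real.hasDerivAt_cosh (k*h)).comp k (hasDerivAt_mul_const h)
  have hSk : ∀ k : ℝ, HasDerivAt (fun k => Real.sinh (k*h)) (Real.cosh (k*h) * h) k := by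
    intro k
    exact (Real.hasDerivAt_sinh (k*h)).comp k (hasDerivAt_mul_const h)
  have hP : ∀ k : ℝ, HasDerivAt (fun k : ℝ => (σ*k^2+g)*h) (2*σ*k*h) k := by
    intro k
    have := (((hasDerivAt_pow 2 k).const_mul σ).add_const g).mul_const h
    exact this.congr_deriv (by push_cast; ring)
  have hGd : ∀ k : ℝ, |k| < 1/h → HasDerivAt G (G1 k) k := by
    intro k hk
    exact ((hP k).mul (hFk k hk)).div (hCk k) ((Real.cosh_pos _).ne')
  have hm0 : |(0:ℝ)| < 1/h := by simpa using h0h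
  have hG0 : G 0 = g*h := by simp [hGdef, sinhc_zero]
  have key : ∀ k : ℝ, |k| < 1/h → k ≠ 0 →
      (σ * k^2 + g) * Real.tanh (k * h) / k = G k := by
    intro k hk hk0
    have hm := mul_sinhc (le_of_lt (habs k hk))
    rw [hGdef]
    simp only
    rw [Real.tanh_eq_sinh_div_cosh, ← hm]
    have hc := (Real.cosh_pos (k*h)).ne'
    field_simp
  constructor
  · -- part 1
    have hcont : Tendsto G (𝓝 0) (𝓝 (g*h)) := by
      have := (hGd 0 hm0).continuousAt
      rwa [ContinuousAt, hG0] at this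
    apply Tendsto.congr' _ (hcont.mono_left nhdsWithin_le_nhds)
    filter_upwards [self_mem_nhdsWithin,
      mem_nhdsWithin_of_mem_nhds (Metric.ball_mem_nhds (0:ℝ) h0h)] with k hk1 hk2
    rw [Metric.mem_ball, Real.dist_eq, sub_zero] at hk2
    exact (key k hk2 (ne_of_gt hk1)).symm
  · -- part 2
    have hE : lam =ᶠ[𝓝 (0:ℝ)] G := by
      filter_upwards [Metric.ball_mem_nhds (0:ℝ) h0h] with k hk
      rw [Metric.mem_ball, Real.dist_eq, sub_zero] at hk
      rcases eq_or_ne k 0 with rfl | hk0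
      · rw [hlam0, hG0]
      · rw [hlam k hk0]
        exact key k hk hk0
    have hdGe : deriv G =ᶠ[𝓝 (0:ℝ)] G1 := by
      filter_upwards [Metric.ball_mem_nhds (0:ℝ) h0h] with k hk
      rw [Metric.mem_ball, Real.dist_eq, sub_zero] at hk
      exact (hGd k hk).deriv
    have hstep1 : deriv (deriv lam) 0 = deriv G1 0 :=
      (hE.deriv.trans hdGe).deriv_eq
    -- compute deriv G1 0
    have ha1 : HasDerivAt (fun k : ℝ => 2*σ*k*h) (2*σ*h) 0 := by
      simpa using ((hasDerivAt_id (0:ℝ)).const_mul (2*σ)).mul_const h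
    have hn1 := ha1.mul (hFk 0 hm0)
    have hn2 := (hP 0).mul ((hF1k 0 hm0).mul_const h)
    have hnum := hn1.add hn2
    have hA0 := (hP 0).mul (hFk 0 hm0)
    have hprod1 := hnum.mul (hCk 0)
    have hprod2 := hA0.mul ((hSk 0).mul_const h)
    have hN := hprod1.sub hprod2
    have hD := (hCk 0).pow 2
    have hne : Real.cosh ((0:ℝ)*h)^2 ≠ 0 := by positivity
    have hfin := hN.div hD hne
    have hG1d : HasDerivAt G1 (2*σ*h - 2/3*g*h^3) 0 := by
      rw [hG1def]
      exact hfin.congr_deriv (by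
      norm_num [sinhc_zero, sinhc1_zero, sinhc2_zero]
      ring)
    rw [hstep1, hG1d.deriv]
    constructor
    · intro hgt
      rw [gt_iff_lt, lt_div_iff₀ (by positivity)] at hgt
      nlinarith [mul_lt_mul_of_pos_right hgt hh]
    · intro hgt
      rw [gt_iff_lt, lt_div_iff₀ (by positivity)]
      nlinarith [mul_pos hh hh, mul_pos (mul_pos hh hh) hh]
end
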